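/- In the planted clique model with parameters n, k, Q (n ≥ 2, 1 ≤ k ≤ n), if k ≥ 4·√(n·ln n) + 2, then with probability at least 1 − 2/n, every vertex v ∈ Q has deg(v) strictly greater than deg(u) for every vertex u ∉ Q. In particular, with this probability the k vertices of highest degree are exactly the planted clique Q. -/

import Mathlib

open MeasureTheory

namespace Stmt4

noncomputable section
open scoped Classical

variable {n : ℕ}

/-- Both endpoints of the unordered pair `p` lie in `Q`. -/
def BothInQ (Q : Finset (Fin n)) (p : Sym2 (Fin n)) : Prop := ∀ x ∈ p, x ∈ Q

/-- Index type: unordered pairs of distinct vertices not both lying in `Q`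
(the "remaining pairs", whose edge-status is random). -/
def FreePair (n : ℕ) (Q : Finset (Fin n)) : Type :=
  {p : Sym2 (Fin n) // ¬ p.IsDiag ∧ ¬ BothInQ Q p}

instance (n : ℕ) (Q : Finset (Fin n)) : Fintype (FreePair n Q) := by
  unfold FreePair; infer_instance

/-- Sample space of the planted clique model: one Boolean for each free pair. -/
def Ω (n : ℕ) (Q : Finset (Fin n)) : Type := FreePair n Q → Bool

instance (n : ℕ) (Q : Finset (Fin n)) : MeasurableSpace (Ω n Q) := MeasurableSpace.pi

/-- The Bernoulli(1/2) measure on `Bool`. -/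
def bernoulliHalf : Measure Bool := (PMF.bernoulli (1 / 2) (by norm_num)).toMeasure

instance : IsProbabilityMeasure bernoulliHalf := PMF.toMeasure.isProbabilityMeasure _

/-- The planted clique measure: each remaining pair is an edge independently w.p. 1/2. -/
def plantedClique (n : ℕ) (Q : Finset (Fin n)) : Measure (Ω n Q) :=
  Measure.pi fun _ => bernoulliHalf

/-- `u` and `v` are adjacent in the planted clique graph: they are distinct, and
either both lie in `Q` (a planted clique edge) or else the coin of the pair `{u,v}`
came up `true`. -/
def Adj (Q : Finset (Fin n)) (ω : Ω n Q) (u v : Fin n) : Prop :=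
  ∃ hne : u ≠ v,
    BothInQ Q s(u, v) ∨
      ∃ h : ¬ BothInQ Q s(u, v),
        ω ⟨s(u, v), ⟨fun hd => hne (Sym2.mk_isDiag_iff.mp hd), h⟩⟩ = true

/-- Degree of vertex `v` in the planted clique graph: its number of neighbors. -/
def deg (Q : Finset (Fin n)) (ω : Ω n Q) (v : Fin n) : ℕ :=
  (Finset.univ.filter fun u : Fin n => Adj Q ω u v).card

end

/-! ### Auxiliary material for the proof -/

noncomputable section
open scoped Classical
open Finset


theorem count_tail {ι κ : Type*} [Fintype ι] [Fintype κ] (e : κ → ι)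
    (he : Function.Injective e) (ε : Bool) (t : ℝ) (ht : 0 ≤ t) :
    ((Finset.univ.filter fun ω : ι → Bool =>
        (Fintype.card κ : ℝ) / 2 + t ≤ ∑ w : κ, (if ω (e w) = ε then (1:ℝ) else 0)).card : ℝ)
      ≤ 2 ^ (Fintype.card ι) * Real.exp (-2 * t ^ 2 / (Fintype.card κ)) := by
  classical
  set K := Fintype.card ι with hK
  set mN := Fintype.card κ with hmN
  set X : (ι → Bool) → ℝ := fun ω => ∑ w : κ, (if ω (e w) = ε then (1:ℝ) else 0) with hX
  set P : (ι → Bool) → Prop := fun ω => (mN : ℝ) / 2 + t ≤ X ω with hP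
  rcases Nat.eq_zero_or_pos mN with h0 | hpos
  · calc ((Finset.univ.filter P).card : ℝ) ≤ (Fintype.card (ι → Bool) : ℝ) := by
          exact_mod_cast Nat.cast_le.mpr (Finset.card_filter_le _ _)
      _ = 2 ^ K := by simp [Fintype.card_fun, hK]
      _ ≤ 2 ^ K * Real.exp (-2 * t ^ 2 / mN) := by rw [h0]; simp
  · set m : ℝ := (mN : ℝ) with hm
    have hm0 : (0:ℝ) < m := Nat.cast_pos.mpr hpos
    set s : ℝ := 4 * t / m with hs
    have hs0 : 0 ≤ s := by positivity
    set a : ℝ := m / 2 + t with ha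
    -- step 1 : card ≤ exp(-s*a) * ∑ exp (s * X)
    have step1 : ((Finset.univ.filter P).card : ℝ)
        ≤ Real.exp (-(s*a)) * ∑ ω : ι → Bool, Real.exp (s * X ω) := by
      rw [Finset.mul_sum]
      rw [Finset.card_filter]
      push_cast
      rw [← Finset.sum_filter_add_sum_filter_not Finset.univ P
        (fun ω => Real.exp (-(s*a)) * Real.exp (s * X ω))]
      have h1 : ∑ ω ∈ Finset.univ.filter P, (if P ω then (1:ℝ) else 0)
          ≤ ∑ ω ∈ Finset.univ.filter P, Real.exp (-(s*a)) * Real.exp (s * X ω) := by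
        apply Finset.sum_le_sum
        intro ω hω
        rw [Finset.mem_filter] at hω
        rw [if_pos hω.2, ← Real.exp_add]
        have : 0 ≤ -(s*a) + s * X ω := by
          have := hω.2
          have h2 : s * a ≤ s * X ω := mul_le_mul_of_nonneg_left this hs0
          linarith
        calc (1:ℝ) = Real.exp 0 := by simp
          _ ≤ _ := Real.exp_le_exp.mpr this
      have h2 : (0:ℝ) ≤ ∑ ω ∈ Finset.univ.filter (fun ω => ¬ P ω),
          Real.exp (-(s*a)) * Real.exp (s * X ω) := by positivity
      have h3 : ∑ ω ∈ Finset.univ.filter (fun ω => ¬ P ω), (if P ω then (1:ℝ) else 0) = 0 := by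
        apply Finset.sum_eq_zero; intro ω hω
        rw [Finset.mem_filter] at hω; rw [if_neg hω.2]
      calc ∑ ω : ι → Bool, (if P ω then (1:ℝ) else 0)
          = ∑ ω ∈ Finset.univ.filter P, (if P ω then (1:ℝ) else 0)
            + ∑ ω ∈ Finset.univ.filter (fun ω => ¬ P ω), (if P ω then (1:ℝ) else 0) :=
            (Finset.sum_filter_add_sum_filter_not _ _ _).symm
        _ ≤ _ := by rw [h3, add_zero]; exact le_add_of_le_of_nonneg h1 h2
    -- step 2 : mgf computation
    set T : Finset ι := Finset.univ.image e with hT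
    have hTcard : T.card = mN := by
      rw [hT, Finset.card_image_of_injective _ he, Finset.card_univ]
    set g : ι → Bool → ℝ := fun i b => if i ∈ T then Real.exp (s * (if b = ε then 1 else 0)) else 1
      with hg
    have hXg : ∀ ω : ι → Bool, Real.exp (s * X ω) = ∏ i : ι, g i (ω i) := by
      intro ω
      have h1 : X ω = ∑ p ∈ T, (if ω p = ε then (1:ℝ) else 0) := by
        rw [hT, Finset.sum_image (fun x _ y _ h => he h)]
      have h2 : ∏ i : ι, g i (ω i) = ∏ i ∈ T, g i (ω i) :=
        (Finset.prod_subset (Finset.subset_univ T) (fun i _ hi => if_neg hi)).symm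
      rw [h2, h1, Finset.mul_sum, Real.exp_sum]
      apply Finset.prod_congr rfl
      intro i hi
      rw [hg]; simp only [if_pos hi]
    have step2 : ∑ ω : ι → Bool, Real.exp (s * X ω)
        = (1 + Real.exp s) ^ mN * 2 ^ (K - mN) := by
      have h1 : ∑ ω : ι → Bool, Real.exp (s * X ω) = ∏ i : ι, ∑ b : Bool, g i b := by
        rw [Finset.prod_univ_sum]
        rw [Fintype.piFinset_univ]
        exact Finset.sum_congr rfl (fun ω _ => hXg ω)
      rw [h1]
      have h2 : ∀ i : ι, ∑ b : Bool, g i b = if i ∈ T then 1 + Real.exp s else 2 := by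
        intro i
        rw [Fintype.sum_bool, hg]
        by_cases hi : i ∈ T
        · simp only [if_pos hi]
          cases ε <;> simp [Real.exp_zero] <;> ring
        · simp [if_neg hi]; norm_num
      rw [Finset.prod_congr rfl (fun i _ => h2 i)]
      rw [← Finset.prod_mul_prod_compl T]
      rw [Finset.prod_congr rfl (fun i hi => if_pos hi),
          Finset.prod_congr rfl (fun i (hi : i ∈ Tᶜ) => if_neg (Finset.mem_compl.mp hi))]
      rw [Finset.prod_const, Finset.prod_const, hTcard, Finset.card_compl, hTcard]
    -- step 3 : numerics
    have hexp1 : (1 : ℝ) + Real.exp s ≤ 2 * Real.exp (s/2 + s^2/8) := by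
      have hc : Real.cosh (s/2) ≤ Real.exp ((s/2)^2/2) := Real.cosh_le_exp_half_sq _
      have h1 : Real.exp (s/2) * Real.exp (s/2) = Real.exp s := by
        rw [← Real.exp_add]; norm_num
      have h2 : Real.exp (s/2) * Real.exp (-(s/2)) = 1 := by
        rw [← Real.exp_add]; simp
      have hid : 1 + Real.exp s = 2 * Real.exp (s/2) * Real.cosh (s/2) := by
        rw [Real.cosh_eq]; nlinarith [h1, h2]
      rw [hid, Real.exp_add]
      have hq : (s/2)^2/2 = s^2/8 := by ring
      rw [hq] at hc
      have := Real.exp_pos (s/2)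
      nlinarith [this.le, hc]
    have hKm : mN ≤ K := Fintype.card_le_of_injective e he
    calc ((Finset.univ.filter P).card : ℝ)
        ≤ Real.exp (-(s*a)) * ((1 + Real.exp s) ^ mN * 2 ^ (K - mN)) := by
          rw [← step2]; exact step1
      _ ≤ Real.exp (-(s*a)) * ((2 * Real.exp (s/2 + s^2/8)) ^ mN * 2 ^ (K - mN)) := by
          apply mul_le_mul_of_nonneg_left _ (Real.exp_pos _).le
          apply mul_le_mul_of_nonneg_right _ (by positivity)
          exact pow_le_pow_left₀ (by positivity) hexp1 _
      _ = 2 ^ K * Real.exp (-(s*a) + m * (s/2 + s^2/8)) := by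
          rw [mul_pow, ← Real.exp_nat_mul, Real.exp_add]
          rw [show (2:ℝ)^mN * Real.exp ((mN:ℝ) * (s/2+s^2/8)) * 2^(K-mN)
              = (2^mN * 2^(K-mN)) * Real.exp ((mN:ℝ) * (s/2+s^2/8)) by ring]
          rw [← pow_add, Nat.add_sub_cancel' hKm, ← hm]
          ring
      _ = 2 ^ K * Real.exp (-2 * t^2 / m) := by
          congr 1
          congr 1
          rw [hs, ha]
          field_simp
          ring
variable {n : ℕ}

instance (n : ℕ) (Q : Finset (Fin n)) : Fintype (Ω n Q) := by
  unfold Ω; infer_instance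

instance (n : ℕ) (Q : Finset (Fin n)) : MeasurableSingletonClass (Ω n Q) := by
  unfold Ω; infer_instance

instance (n : ℕ) (Q : Finset (Fin n)) : IsProbabilityMeasure (plantedClique n Q) := by
  unfold plantedClique; exact MeasureTheory.Measure.pi.instIsProbabilityMeasure _

lemma measSet {Q : Finset (Fin n)} (S : Set (Ω n Q)) : MeasurableSet S :=
  (Set.to_countable S).measurableSet

lemma bernoulliHalf_singleton (b : Bool) : bernoulliHalf {b} = 2⁻¹ := by
  rw [bernoulliHalf, PMF.toMeasure_apply_singleton _ _ (measurableSet_singleton b)]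
  cases b <;> simp [PMF.bernoulli_apply]

lemma meas_singleton {Q : Finset (Fin n)} (ω : Ω n Q) :
    plantedClique n Q {ω} = 2⁻¹ ^ (Fintype.card (FreePair n Q)) := by
  have h1 : ({ω} : Set (Ω n Q)) = Set.pi Set.univ (fun i => {ω i}) := by
    ext ω'
    constructor
    · rintro rfl; exact fun i _ => rfl
    · intro h; exact funext fun i => h i (Set.mem_univ i)
  have h2 := Measure.pi_pi (fun _ : FreePair n Q => bernoulliHalf) (fun i => {ω i})
  rw [h1, plantedClique]
  erw [h2]
  simp [bernoulliHalf_singleton, Finset.prod_const]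

lemma meas_eq {Q : Finset (Fin n)} (S : Set (Ω n Q)) :
    plantedClique n Q S
      = ENNReal.ofReal ((S.toFinite.toFinset.card : ℝ)
          * (2⁻¹ : ℝ) ^ (Fintype.card (FreePair n Q))) := by
  classical
  have h1 : S = ⋃ x ∈ S.toFinite.toFinset, ({x} : Set (Ω n Q)) := by
    ext y
    simp only [Set.mem_iUnion, Set.mem_singleton_iff, Set.Finite.mem_toFinset]
    exact ⟨fun h => ⟨y, h, rfl⟩, fun ⟨x, hx, hyx⟩ => hyx ▸ hx⟩
  have h2 : plantedClique n Q S = ∑ x ∈ S.toFinite.toFinset, plantedClique n Q {x} := by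
    conv_lhs => rw [h1]
    exact measure_biUnion_finset
      (fun x _ y _ hxy => by simp [Set.disjoint_singleton, hxy]) (fun x _ => measSet _)
  rw [h2, Finset.sum_congr rfl (fun x _ => meas_singleton x), Finset.sum_const, nsmul_eq_mul]
  rw [ENNReal.ofReal_mul (Nat.cast_nonneg _), ENNReal.ofReal_natCast,
    ENNReal.ofReal_pow (by norm_num)]
  congr 2
  rw [ENNReal.ofReal_inv_of_pos (by norm_num : (0:ℝ) < 2)]
  norm_num

/-- The free pair `{w,u}` when `w ≠ u` and not both lie in `Q`. -/
def fp (Q : Finset (Fin n)) (w u : Fin n) (hne : w ≠ u) (h : w ∉ Q ∨ u ∉ Q) : FreePair n Q :=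
  ⟨s(w,u), fun hd => hne (Sym2.mk_isDiag_iff.mp hd),
    fun hB => h.elim (fun h' => h' (hB w (Sym2.mem_mk_left w u)))
      (fun h' => h' (hB u (Sym2.mem_mk_right w u)))⟩

lemma adj_iff_coin {Q : Finset (Fin n)} {ω : Ω n Q} {w u : Fin n}
    (hne : w ≠ u) (h : w ∉ Q ∨ u ∉ Q) :
    Adj Q ω w u ↔ ω (fp Q w u hne h) = true := by
  have hnB : ¬ BothInQ Q s(w, u) := fun hB =>
    h.elim (fun h' => h' (hB w (Sym2.mem_mk_left w u)))
      (fun h' => h' (hB u (Sym2.mem_mk_right w u)))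
  constructor
  · rintro ⟨hne', hB | ⟨hnB', hcoin⟩⟩
    · exact absurd hB hnB
    · exact hcoin
  · intro hc
    exact ⟨hne, Or.inr ⟨hnB, hc⟩⟩

lemma not_adj_self {Q : Finset (Fin n)} (ω : Ω n Q) (u : Fin n) : ¬ Adj Q ω u u :=
  fun ⟨hne, _⟩ => hne rfl

lemma adj_clique {Q : Finset (Fin n)} (ω : Ω n Q) {w u : Fin n}
    (hw : w ∈ Q) (hu : u ∈ Q) (hne : w ≠ u) : Adj Q ω w u := by
  refine ⟨hne, Or.inl ?_⟩
  intro x hx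
  rcases Sym2.mem_iff.mp hx with rfl | rfl
  · exact hw
  · exact hu

lemma deg_cast (Q : Finset (Fin n)) (ω : Ω n Q) (u : Fin n) :
    (deg Q ω u : ℝ) = ∑ w : Fin n, (if Adj Q ω w u then (1:ℝ) else 0) := by
  rw [deg, Finset.card_filter]
  push_cast
  rfl

lemma deg_notin {Q : Finset (Fin n)} {u : Fin n} (hu : u ∉ Q) (ω : Ω n Q) :
    (deg Q ω u : ℝ) = ∑ w : ↥(Finset.univ.erase u),
      (if ω (fp Q w.1 u (Finset.ne_of_mem_erase w.2) (Or.inr hu)) = true then (1:ℝ) else 0) := by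
  rw [deg_cast, ← Finset.sum_erase_add _ _ (Finset.mem_univ u),
    if_neg (not_adj_self ω u), add_zero]
  rw [show (∑ w : ↥(Finset.univ.erase u),
      (if ω (fp Q w.1 u (Finset.ne_of_mem_erase w.2) (Or.inr hu)) = true then (1:ℝ) else 0))
      = ∑ w : ↥(Finset.univ.erase u), (fun x => if Adj Q ω x u then (1:ℝ) else 0) w.1 from
    Finset.sum_congr rfl fun w _ =>
      (if_congr (adj_iff_coin (Finset.ne_of_mem_erase w.2) (Or.inr hu)) rfl rfl).symm]
  exact (Finset.sum_coe_sort (Finset.univ.erase u) _).symm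

lemma deg_in {Q : Finset (Fin n)} {v : Fin n} (hv : v ∈ Q) (ω : Ω n Q) :
    (deg Q ω v : ℝ) = ((Q.card : ℝ) - 1) + ∑ w : ↥(Finset.univ.filter (· ∉ Q)),
      (if ω (fp Q w.1 v (fun heq => (Finset.mem_filter.mp w.2).2 (by rw [heq]; exact hv))
          (Or.inl (Finset.mem_filter.mp w.2).2)) = true then (1:ℝ) else 0) := by
  rw [deg_cast, ← Finset.sum_filter_add_sum_filter_not Finset.univ (· ∈ Q)]
  congr 1
  · -- clique part
    have hQ : Finset.univ.filter (· ∈ Q) = Q := by ext w; simp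
    rw [hQ]
    have h1 : ∀ w ∈ Q, (if Adj Q ω w v then (1:ℝ) else 0) = (if w ≠ v then 1 else 0) := by
      intro w hw
      by_cases hwv : w = v
      · subst hwv; rw [if_neg (not_adj_self ω w), if_neg (by simp)]
      · rw [if_pos (adj_clique ω hw hv hwv), if_pos hwv]
    rw [Finset.sum_congr rfl h1, Finset.sum_boole, Finset.filter_ne', Finset.card_erase_of_mem hv]
    have : 1 ≤ Q.card := Finset.card_pos.mpr ⟨v, hv⟩
    push_cast [Nat.cast_sub this]
    ring
  · rw [show (∑ w : ↥(Finset.univ.filter (· ∉ Q)),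
        (if ω (fp Q w.1 v (fun heq => (Finset.mem_filter.mp w.2).2 (by rw [heq]; exact hv))
          (Or.inl (Finset.mem_filter.mp w.2).2)) = true then (1:ℝ) else 0))
        = ∑ w : ↥(Finset.univ.filter (· ∉ Q)), (fun x => if Adj Q ω x v then (1:ℝ) else 0) w.1 from
      Finset.sum_congr rfl fun w _ =>
        (if_congr (adj_iff_coin (fun heq => (Finset.mem_filter.mp w.2).2 (by rw [heq]; exact hv))
          (Or.inl (Finset.mem_filter.mp w.2).2)) rfl rfl).symm]
    exact (Finset.sum_coe_sort (Finset.univ.filter (· ∉ Q)) _).symm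

lemma meas_le {Q : Finset (Fin n)} (S : Set (Ω n Q)) (r : ℝ)
    (h : (S.toFinite.toFinset.card : ℝ) ≤ r * 2 ^ (Fintype.card (FreePair n Q))) :
    plantedClique n Q S ≤ ENNReal.ofReal r := by
  rw [meas_eq]
  apply ENNReal.ofReal_le_ofReal
  set N := Fintype.card (FreePair n Q)
  have h2 : (0:ℝ) < 2 ^ N := by positivity
  rw [show (2⁻¹:ℝ)^N = ((2:ℝ)^N)⁻¹ by rw [inv_pow], ← div_eq_mul_inv, div_le_iff₀ h2]
  exact h

lemma meas_tail {Q : Finset (Fin n)} {κ : Type*} [Fintype κ] (e : κ → FreePair n Q)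
    (he : Function.Injective e) (ε : Bool) (t : ℝ) (ht : 0 ≤ t) :
    plantedClique n Q {ω : Ω n Q |
        (Fintype.card κ : ℝ)/2 + t ≤ ∑ w : κ, (if ω (e w) = ε then (1:ℝ) else 0)}
      ≤ ENNReal.ofReal (Real.exp (-2 * t^2 / (Fintype.card κ))) := by
  apply meas_le
  have h1 : (Set.toFinite {ω : Ω n Q |
        (Fintype.card κ : ℝ)/2 + t ≤ ∑ w : κ, (if ω (e w) = ε then (1:ℝ) else 0)}).toFinset
      = Finset.univ.filter (fun ω : FreePair n Q → Bool =>
          (Fintype.card κ : ℝ)/2 + t ≤ ∑ w : κ, (if ω (e w) = ε then (1:ℝ) else 0)) := by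
    ext ω
    simp only [Set.Finite.mem_toFinset, Set.mem_setOf_eq, Finset.mem_filter, Finset.mem_univ, true_and]
    exact ⟨fun h => Finset.mem_filter.mpr ⟨Finset.mem_univ _, h⟩, fun h => (Finset.mem_filter.mp h).2⟩
  rw [h1, mul_comm]
  exact count_tail e he ε t ht

lemma flip_sum {κ : Type*} [Fintype κ] (f : κ → Bool) :
    ∑ w : κ, (if f w = false then (1:ℝ) else 0)
      = (Fintype.card κ : ℝ) - ∑ w : κ, (if f w = true then (1:ℝ) else 0) := by
  rw [eq_sub_iff_add_eq, ← Finset.sum_add_distrib]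
  have h1 : ∀ w : κ, (if f w = false then (1:ℝ) else 0) + (if f w = true then (1:ℝ) else 0) = 1 := by
    intro w; cases hf : f w <;> simp
  rw [Finset.sum_congr rfl (fun w _ => h1 w), Finset.sum_const, Finset.card_univ, nsmul_eq_mul,
    mul_one]

/-- Bad event for a vertex `u` outside `Q`: its coin-degree is too big. -/
def Bset (Q : Finset (Fin n)) (t : ℝ) (u : ↥(Finset.univ.filter (· ∉ Q))) : Set (Ω n Q) :=
  {ω : Ω n Q | (Fintype.card ↥(Finset.univ.erase u.1) : ℝ)/2 + t ≤
    ∑ w : ↥(Finset.univ.erase u.1),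
      (if ω (fp Q w.1 u.1 (Finset.ne_of_mem_erase w.2)
          (Or.inr (Finset.mem_filter.mp u.2).2)) = true then (1:ℝ) else 0)}

/-- Bad event for a vertex `v` of `Q`: too many of its outside coins are `false`. -/
def Cset (Q : Finset (Fin n)) (t : ℝ) (v : ↥Q) : Set (Ω n Q) :=
  {ω : Ω n Q | (Fintype.card ↥(Finset.univ.filter (· ∉ Q)) : ℝ)/2 + t ≤
    ∑ w : ↥(Finset.univ.filter (· ∉ Q)),
      (if ω (fp Q w.1 v.1 (fun heq => (Finset.mem_filter.mp w.2).2 (by rw [heq]; exact v.2))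
          (Or.inl (Finset.mem_filter.mp w.2).2)) = false then (1:ℝ) else 0)}

end
theorem clique_degrees_dominate (n k : ℕ) (hn : 2 ≤ n) (hk1 : 1 ≤ k) (hkn : k ≤ n)
    (Q : Finset (Fin n)) (hQ : Q.card = k)
    (hbig : 4 * Real.sqrt (n * Real.log n) + 2 ≤ (k : ℝ)) :
    1 - ENNReal.ofReal (2 / n) ≤
      plantedClique n Q {ω : Ω n Q |
        ∀ v ∈ Q, ∀ u ∉ Q, deg Q ω u < deg Q ω v} := by
  classical
  set t : ℝ := Real.sqrt (n * Real.log n) with htdef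
  have hn2 : (2:ℝ) ≤ n := by exact_mod_cast hn
  have hn0 : (0:ℝ) < n := by linarith
  have hlog0 : 0 < Real.log n := Real.log_pos (by linarith)
  have ht0 : 0 ≤ t := Real.sqrt_nonneg _
  have htpos : 0 < t := Real.sqrt_pos.mpr (by positivity)
  have ht2 : t^2 = n * Real.log n := Real.sq_sqrt (by positivity)
  -- the numeric tail bound
  have hexp : ∀ m : ℕ, 1 ≤ m → m ≤ n → Real.exp (-2 * t^2 / m) ≤ 1/(n:ℝ)^2 := by
    intro m h1 h2
    have hm0 : (0:ℝ) < m := by exact_mod_cast h1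
    have hmn : (m:ℝ) ≤ n := by exact_mod_cast h2
    have h3 : Real.exp (-2*t^2/m) ≤ Real.exp (-(2*Real.log n)) := by
      apply Real.exp_le_exp.mpr
      rw [ht2, div_le_iff₀ hm0]
      nlinarith [hlog0.le, hmn, hm0.le]
    have h4 : Real.exp (-(2*Real.log n)) = 1/(n:ℝ)^2 := by
      rw [Real.exp_neg, show 2*Real.log n = Real.log n + Real.log n by ring, Real.exp_add,
        Real.exp_log hn0, one_div]
      ring_nf
    rw [← h4]; exact h3
  -- cardinalities
  have hcardB : ∀ u : Fin n, Fintype.card ↥(Finset.univ.erase u) = n - 1 := by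
    intro u
    rw [Fintype.card_coe, Finset.card_erase_of_mem (Finset.mem_univ _), Finset.card_univ,
      Fintype.card_fin]
  have hfilterQ : Finset.univ.filter (· ∉ Q) = Qᶜ := by
    ext w; simp [Finset.mem_compl]
  have hcardM : Fintype.card ↥(Finset.univ.filter (· ∉ Q)) = n - k := by
    rw [Fintype.card_coe, hfilterQ, Finset.card_compl, hQ, Fintype.card_fin]
  have hcardQ : Fintype.card ↥Q = k := by rw [Fintype.card_coe, hQ]
  -- measure bounds on single bad events
  have hBmeas : ∀ u, plantedClique n Q (Bset Q t u) ≤ ENNReal.ofReal (1/(n:ℝ)^2) := by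
    intro u
    have he : Function.Injective (fun w : ↥(Finset.univ.erase u.1) =>
        fp Q w.1 u.1 (Finset.ne_of_mem_erase w.2) (Or.inr (Finset.mem_filter.mp u.2).2)) := by
      intro w w' h
      have h2 : s(w.1, u.1) = s(w'.1, u.1) := congrArg Subtype.val h
      rcases Sym2.eq_iff.mp h2 with ⟨h3, _⟩ | ⟨h3, h4⟩
      · exact Subtype.ext h3
      · exact absurd h3 (Finset.ne_of_mem_erase w.2)
    refine le_trans (meas_tail _ he true t ht0) (ENNReal.ofReal_le_ofReal (hexp _ ?_ ?_))
    · rw [hcardB]; omega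
    · rw [hcardB]; omega
  have hCmeas : ∀ v, plantedClique n Q (Cset Q t v) ≤ ENNReal.ofReal (1/(n:ℝ)^2) := by
    intro v
    by_cases hkn' : k = n
    · have hempty : Cset Q t v = ∅ := by
        ext ω
        simp only [Cset, Set.mem_setOf_eq, Set.mem_empty_iff_false, iff_false]
        intro hω
        have h0 : Fintype.card ↥(Finset.univ.filter (· ∉ Q)) = 0 := by rw [hcardM]; omega
        haveI : IsEmpty ↥(Finset.univ.filter (· ∉ Q)) := Fintype.card_eq_zero_iff.mp h0
        rw [show (Finset.univ : Finset ↥(Finset.univ.filter (· ∉ Q))) = ∅ from Finset.univ_eq_empty,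
          Finset.sum_empty, h0] at hω
        norm_num at hω
        linarith
      rw [hempty]
      simp
    · have he : Function.Injective (fun w : ↥(Finset.univ.filter (· ∉ Q)) =>
          fp Q w.1 v.1 (fun heq => (Finset.mem_filter.mp w.2).2 (by rw [heq]; exact v.2))
            (Or.inl (Finset.mem_filter.mp w.2).2)) := by
        intro w w' h
        have h2 : s(w.1, v.1) = s(w'.1, v.1) := congrArg Subtype.val h
        rcases Sym2.eq_iff.mp h2 with ⟨h3, _⟩ | ⟨h3, h4⟩
        · exact Subtype.ext h3
        · exact absurd (h3 ▸ v.2) (Finset.mem_filter.mp w.2).2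
      refine le_trans (meas_tail _ he false t ht0) (ENNReal.ofReal_le_ofReal (hexp _ ?_ ?_))
      · rw [hcardM]; omega
      · rw [hcardM]; omega
  -- union bound
  have hAmeas : plantedClique n Q
      ((⋃ u ∈ (Finset.univ : Finset ↥(Finset.univ.filter (· ∉ Q))), Bset Q t u)
        ∪ (⋃ v ∈ (Finset.univ : Finset ↥Q), Cset Q t v)) ≤ ENNReal.ofReal (2/(n:ℝ)) := by
    refine le_trans (measure_union_le _ _) ?_
    have h1 : plantedClique n Q
        (⋃ u ∈ (Finset.univ : Finset ↥(Finset.univ.filter (· ∉ Q))), Bset Q t u)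
        ≤ (n - k) • ENNReal.ofReal (1/(n:ℝ)^2) := by
      refine le_trans (measure_biUnion_finset_le _ _) ?_
      have h2 := Finset.sum_le_card_nsmul Finset.univ (fun u => plantedClique n Q (Bset Q t u))
        (ENNReal.ofReal (1/(n:ℝ)^2)) (fun u _ => hBmeas u)
      rwa [Finset.card_univ, hcardM] at h2
    have h2 : plantedClique n Q (⋃ v ∈ (Finset.univ : Finset ↥Q), Cset Q t v)
        ≤ k • ENNReal.ofReal (1/(n:ℝ)^2) := by
      refine le_trans (measure_biUnion_finset_le _ _) ?_
      have h3 := Finset.sum_le_card_nsmul Finset.univ (fun v => plantedClique n Q (Cset Q t v))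
        (ENNReal.ofReal (1/(n:ℝ)^2)) (fun v _ => hCmeas v)
      rwa [Finset.card_univ, hcardQ] at h3
    calc _ ≤ (n - k) • ENNReal.ofReal (1/(n:ℝ)^2) + k • ENNReal.ofReal (1/(n:ℝ)^2) :=
          add_le_add h1 h2
      _ = n • ENNReal.ofReal (1/(n:ℝ)^2) := by rw [← add_nsmul, Nat.sub_add_cancel hkn]
      _ ≤ ENNReal.ofReal (2/(n:ℝ)) := by
          rw [nsmul_eq_mul, ← ENNReal.ofReal_natCast n, ← ENNReal.ofReal_mul (by positivity)]
          apply ENNReal.ofReal_le_ofReal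
          rw [show (n:ℝ) * (1/(n:ℝ)^2) = 1/(n:ℝ) by field_simp]
          gcongr
          norm_num
  -- the good event contains the complement of the bad events
  have hsub : ((⋃ u ∈ (Finset.univ : Finset ↥(Finset.univ.filter (· ∉ Q))), Bset Q t u)
        ∪ (⋃ v ∈ (Finset.univ : Finset ↥Q), Cset Q t v))ᶜ
      ⊆ {ω : Ω n Q | ∀ v ∈ Q, ∀ u ∉ Q, deg Q ω u < deg Q ω v} := by
    intro ω hω
    rw [Set.mem_compl_iff] at hω
    have hB' : ∀ u, ω ∉ Bset Q t u := fun u h =>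
      hω (Or.inl (Set.mem_iUnion₂.mpr ⟨u, Finset.mem_univ u, h⟩))
    have hC' : ∀ v, ω ∉ Cset Q t v := fun v h =>
      hω (Or.inr (Set.mem_iUnion₂.mpr ⟨v, Finset.mem_univ v, h⟩))
    intro v hv u hu
    -- the u side
    have huB : ¬ ((Fintype.card ↥(Finset.univ.erase u) : ℝ)/2 + t ≤
        ∑ w : ↥(Finset.univ.erase u),
          (if ω (fp Q w.1 u (Finset.ne_of_mem_erase w.2) (Or.inr hu)) = true
            then (1:ℝ) else 0)) :=
      hB' ⟨u, Finset.mem_filter.mpr ⟨Finset.mem_univ u, hu⟩⟩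
    have hdu : (deg Q ω u : ℝ) < (Fintype.card ↥(Finset.univ.erase u) : ℝ)/2 + t := by
      rw [deg_notin hu ω]
      exact not_le.mp huB
    have hc1 : (Fintype.card ↥(Finset.univ.erase u) : ℝ) = (n:ℝ) - 1 := by
      rw [hcardB u, Nat.cast_sub (by omega : 1 ≤ n), Nat.cast_one]
    -- the v side
    have hvC : ¬ ((Fintype.card ↥(Finset.univ.filter (· ∉ Q)) : ℝ)/2 + t ≤
        ∑ w : ↥(Finset.univ.filter (· ∉ Q)),
          (if ω (fp Q w.1 v (fun heq => (Finset.mem_filter.mp w.2).2 (by rw [heq]; exact hv))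
            (Or.inl (Finset.mem_filter.mp w.2).2)) = false then (1:ℝ) else 0)) :=
      hC' ⟨v, hv⟩
    have hflip : ∑ w : ↥(Finset.univ.filter (· ∉ Q)),
          (if ω (fp Q w.1 v (fun heq => (Finset.mem_filter.mp w.2).2 (by rw [heq]; exact hv))
            (Or.inl (Finset.mem_filter.mp w.2).2)) = false then (1:ℝ) else 0)
        = (Fintype.card ↥(Finset.univ.filter (· ∉ Q)) : ℝ) -
          ∑ w : ↥(Finset.univ.filter (· ∉ Q)),
          (if ω (fp Q w.1 v (fun heq => (Finset.mem_filter.mp w.2).2 (by rw [heq]; exact hv))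
            (Or.inl (Finset.mem_filter.mp w.2).2)) = true then (1:ℝ) else 0) :=
      flip_sum _
    have hdv : (deg Q ω v : ℝ) = ((Q.card : ℝ) - 1) +
        ∑ w : ↥(Finset.univ.filter (· ∉ Q)),
          (if ω (fp Q w.1 v (fun heq => (Finset.mem_filter.mp w.2).2 (by rw [heq]; exact hv))
            (Or.inl (Finset.mem_filter.mp w.2).2)) = true then (1:ℝ) else 0) := deg_in hv ω
    have hc2 : (Fintype.card ↥(Finset.univ.filter (· ∉ Q)) : ℝ) = (n:ℝ) - (k:ℝ) := by
      rw [hcardM, Nat.cast_sub hkn]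
    have hQk : (Q.card : ℝ) = (k:ℝ) := by rw [hQ]
    rw [hflip] at hvC
    have h6 := not_le.mp hvC
    have final : (deg Q ω u : ℝ) < (deg Q ω v : ℝ) := by
      rw [hdv, hQk]
      rw [hc1] at hdu
      rw [hc2] at h6
      linarith
    exact_mod_cast final
  -- conclude
  refine le_trans ?_ (measure_mono hsub)
  rw [prob_compl_eq_one_sub (measSet _)]
  exact tsub_le_tsub_left hAmeas 1

end Stmt4
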